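/- arXiv:1201.4780 — 2 statements merged into one kernel-verified Lean document; each statement's English description precedes it below -/
import Mathlib

section
/- For the Hadamard walk on the integer line, for every t ∈ ℕ with t ≥ 1 and every integer n with 0 ≤ n ≤ t and t − n even, the position probabilities satisfy the reflection relations p_L(−n,t) = p_L(n−2,t) and p_R(−n,t) = ((t−n)/(t+n))² · p_R(n,t). -/
/-- The Hadamard walk on the integer line: `hadamardWalk t n = (Ψ_L(n,t), Ψ_R(n,t))`. -/
noncomputable def hadamardWalk : ℕ → ℤ → ℂ × ℂ
  | 0, n => if n = 0 then (0, 1) else (0, 0)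
  | t + 1, n =>
      (((hadamardWalk t (n + 1)).2 - (hadamardWalk t (n + 1)).1) / (Real.sqrt 2 : ℂ),
       ((hadamardWalk t (n - 1)).2 + (hadamardWalk t (n - 1)).1) / (Real.sqrt 2 : ℂ))

/-- `p_L(n,t) = |Ψ_L(n,t)|²`. -/
noncomputable def pL (n : ℤ) (t : ℕ) : ℝ := ‖(hadamardWalk t n).1‖ ^ 2

/-- `p_R(n,t) = |Ψ_R(n,t)|²`. -/
noncomputable def pR (n : ℤ) (t : ℕ) : ℝ := ‖(hadamardWalk t n).2‖ ^ 2

/-! ### Auxiliary combinatorial sums -/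

def Sval (a b : ℕ) : ℤ :=
  ∑ k ∈ Finset.range (b + 1), (-1) ^ k * (a.choose k : ℤ) * (b.choose k : ℤ)

def Tval (a b : ℕ) : ℤ :=
  ∑ k ∈ Finset.range (b + 1), (-1) ^ k * (a.choose (k + 1) : ℤ) * (b.choose k : ℤ)

def Lval : ℕ → ℕ → ℤ
  | _, 0 => 0
  | a, b + 1 => (-1) ^ b * Sval a b

def Rval : ℕ → ℕ → ℤ
  | _, 0 => 1
  | a, b + 1 => (-1) ^ b * Tval a b

lemma Sval_ext (a b m : ℕ) (h : b + 1 ≤ m) :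
    Sval a b = ∑ k ∈ Finset.range m, (-1) ^ k * (a.choose k : ℤ) * (b.choose k : ℤ) := by
  rw [Sval]
  apply Finset.sum_subset (Finset.range_subset_range.2 h)
  intro k _ hk
  simp only [Finset.mem_range, not_lt] at hk
  rw [Nat.choose_eq_zero_of_lt (show b < k by omega)]
  ring

lemma Tval_ext (a b m : ℕ) (h : b + 1 ≤ m) :
    Tval a b = ∑ k ∈ Finset.range m, (-1) ^ k * (a.choose (k + 1) : ℤ) * (b.choose k : ℤ) := by
  rw [Tval]
  apply Finset.sum_subset (Finset.range_subset_range.2 h)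
  intro k _ hk
  simp only [Finset.mem_range, not_lt] at hk
  rw [Nat.choose_eq_zero_of_lt (show b < k by omega)]
  ring

lemma Sval_comm (a b : ℕ) : Sval a b = Sval b a := by
  rw [Sval_ext a b (a + b + 1) (by omega), Sval_ext b a (a + b + 1) (by omega)]
  exact Finset.sum_congr rfl (fun k _ => by ring)

lemma Tval_zero_left (b : ℕ) : Tval 0 b = 0 := by
  rw [Tval]
  apply Finset.sum_eq_zero
  intro k _
  simp [Nat.choose_eq_zero_of_lt (Nat.succ_pos k)]

lemma choose_mul_aux (p k : ℕ) :
    ((p + 1 : ℕ) : ℤ) * ((p.choose k : ℕ) : ℤ) = ((p + 1).choose (k + 1) : ℤ) * ((k + 1 : ℕ) : ℤ) := by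
  have := Nat.add_one_mul_choose_eq p k
  exact_mod_cast congrArg (Nat.cast : ℕ → ℤ) this

lemma Tident (p q : ℕ) : ((p : ℤ) + 1) * Tval (q + 1) p = ((q : ℤ) + 1) * Tval (p + 1) q := by
  rw [Tval_ext (q + 1) p (p + q + 2) (by omega), Tval_ext (p + 1) q (p + q + 2) (by omega),
    Finset.mul_sum, Finset.mul_sum]
  apply Finset.sum_congr rfl
  intro k _
  have h1 := choose_mul_aux p k
  have h2 := choose_mul_aux q k
  push_cast at h1 h2 ⊢
  linear_combination ((-1 : ℤ) ^ k * ((q + 1).choose (k + 1) : ℤ)) * h1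
    - ((-1 : ℤ) ^ k * ((p + 1).choose (k + 1) : ℤ)) * h2

lemma Sval_rec (a c : ℕ) : Sval a (c + 1) = Sval a c - Tval a c := by
  have hsplit : Sval a (c + 1)
      = (∑ i ∈ Finset.range (c + 1),
          (-1) ^ (i + 1) * (a.choose (i + 1) : ℤ) * ((c + 1).choose (i + 1) : ℤ)) + 1 := by
    rw [Sval, Finset.sum_range_succ']
    simp
  rw [hsplit]
  have hpascal : ∀ i ∈ Finset.range (c + 1),
      (-1) ^ (i + 1) * (a.choose (i + 1) : ℤ) * ((c + 1).choose (i + 1) : ℤ)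
      = (-(((-1) ^ i * (a.choose (i + 1) : ℤ) * (c.choose i : ℤ))))
        + (-1) ^ (i + 1) * (a.choose (i + 1) : ℤ) * (c.choose (i + 1) : ℤ) := by
    intro i _
    rw [Nat.choose_succ_succ c i]
    push_cast
    ring
  rw [Finset.sum_congr rfl hpascal, Finset.sum_add_distrib, Finset.sum_neg_distrib]
  have hT : (∑ i ∈ Finset.range (c + 1), (-1) ^ i * (a.choose (i + 1) : ℤ) * (c.choose i : ℤ))
      = Tval a c := by rw [Tval]
  have hS : (∑ i ∈ Finset.range (c + 1), (-1) ^ (i + 1) * (a.choose (i + 1) : ℤ) * (c.choose (i + 1) : ℤ)) + 1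
      = Sval a c := by
    have hlast : ((-1 : ℤ)) ^ (c + 1) * (a.choose (c + 1) : ℤ) * (c.choose (c + 1) : ℤ) = 0 := by
      rw [Nat.choose_eq_zero_of_lt (Nat.lt_succ_self c)]
      ring
    rw [Finset.sum_range_succ, hlast, add_zero, Sval, Finset.sum_range_succ']
    simp
  linarith [hT, hS]

lemma Tval_rec (a c : ℕ) : Tval (a + 1) c = Tval a c + Sval a c := by
  rw [Tval, Tval, Sval, ← Finset.sum_add_distrib]
  apply Finset.sum_congr rfl
  intro k _
  rw [Nat.choose_succ_succ a k]
  push_cast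
  ring

lemma Lval_rec (a b : ℕ) : Lval a (b + 1) = Rval a b - Lval a b := by
  cases b with
  | zero => simp [Lval, Rval, Sval]
  | succ c =>
    show (-1 : ℤ) ^ (c + 1) * Sval a (c + 1) = (-1) ^ c * Tval a c - (-1) ^ c * Sval a c
    rw [Sval_rec]
    ring

lemma Rval_rec (a b : ℕ) : Rval (a + 1) b = Rval a b + Lval a b := by
  cases b with
  | zero => simp [Rval, Lval]
  | succ c =>
    show (-1 : ℤ) ^ c * Tval (a + 1) c = (-1) ^ c * Tval a c + (-1) ^ c * Sval a c
    rw [Tval_rec]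
    ring

lemma Rval_zero_left (b : ℕ) (hb : 1 ≤ b) : Rval 0 b = 0 := by
  obtain ⟨c, rfl⟩ : ∃ c, b = c + 1 := ⟨b - 1, by omega⟩
  show (-1 : ℤ) ^ c * Tval 0 c = 0
  rw [Tval_zero_left, mul_zero]

/-! ### Vanishing outside the light cone -/

lemma hadamardWalk_vanish : ∀ t : ℕ, ∀ n : ℤ, (t : ℤ) < |n| → hadamardWalk t n = 0 := by
  intro t
  induction t with
  | zero =>
    intro n hn
    have : n ≠ 0 := by
      intro h; rw [h] at hn; simp at hn
    simp [hadamardWalk, this]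
  | succ t ih =>
    intro n hn
    have h1 : (t : ℤ) < |n + 1| := by
      push_cast at hn ⊢
      rcases abs_cases n with ⟨h, h'⟩ | ⟨h, h'⟩ <;> rcases abs_cases (n + 1) with ⟨g, g'⟩ | ⟨g, g'⟩ <;> omega
    have h2 : (t : ℤ) < |n - 1| := by
      push_cast at hn ⊢
      rcases abs_cases n with ⟨h, h'⟩ | ⟨h, h'⟩ <;> rcases abs_cases (n - 1) with ⟨g, g'⟩ | ⟨g, g'⟩ <;> omega
    show (_, _) = (0 : ℂ × ℂ)
    rw [ih _ h1, ih _ h2]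
    simp [Prod.ext_iff]

/-! ### Closed form for the amplitudes -/

lemma sqrt_two_ne_zero : (Real.sqrt 2 : ℂ) ≠ 0 := by
  simp only [ne_eq, Complex.ofReal_eq_zero]
  positivity

lemma hadamardWalk_closed : ∀ t a b : ℕ, a + b = t →
    hadamardWalk t ((a : ℤ) - (b : ℤ))
      = ((Lval a b : ℂ) / (Real.sqrt 2 : ℂ) ^ t, (Rval a b : ℂ) / (Real.sqrt 2 : ℂ) ^ t) := by
  intro t
  induction t with
  | zero =>
    intro a b hab
    obtain ⟨rfl, rfl⟩ : a = 0 ∧ b = 0 := by omega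
    simp [hadamardWalk, Lval, Rval]
  | succ t ih =>
    intro a b hab
    have hwalk : hadamardWalk (t + 1) ((a : ℤ) - (b : ℤ))
        = (((hadamardWalk t ((a : ℤ) - b + 1)).2 - (hadamardWalk t ((a : ℤ) - b + 1)).1) / (Real.sqrt 2 : ℂ),
           ((hadamardWalk t ((a : ℤ) - b - 1)).2 + (hadamardWalk t ((a : ℤ) - b - 1)).1) / (Real.sqrt 2 : ℂ)) := rfl
    rw [hwalk]
    have hpow : (Real.sqrt 2 : ℂ) ^ (t + 1) = (Real.sqrt 2 : ℂ) ^ t * (Real.sqrt 2 : ℂ) := pow_succ _ _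
    -- first component
    have hfst : ((hadamardWalk t ((a : ℤ) - b + 1)).2 - (hadamardWalk t ((a : ℤ) - b + 1)).1) / (Real.sqrt 2 : ℂ)
        = (Lval a b : ℂ) / (Real.sqrt 2 : ℂ) ^ (t + 1) := by
      cases b with
      | zero =>
        have hz : hadamardWalk t ((a : ℤ) - (0 : ℕ) + 1) = 0 := by
          apply hadamardWalk_vanish
          have : ((a : ℤ) - (0:ℕ) + 1) = (a + 1 : ℤ) := by push_cast; ring
          rw [this, abs_of_nonneg (by positivity)]
          omega
        rw [hz]
        simp [Lval]
      | succ c =>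
        have harg : (a : ℤ) - (c + 1 : ℕ) + 1 = (a : ℤ) - (c : ℤ) := by push_cast; ring
        rw [harg, ih a c (by omega)]
        rw [Lval_rec, hpow]
        push_cast
        field_simp
    -- second component
    have hsnd : ((hadamardWalk t ((a : ℤ) - b - 1)).2 + (hadamardWalk t ((a : ℤ) - b - 1)).1) / (Real.sqrt 2 : ℂ)
        = (Rval a b : ℂ) / (Real.sqrt 2 : ℂ) ^ (t + 1) := by
      cases a with
      | zero =>
        have hz : hadamardWalk t ((0 : ℕ) - (b : ℤ) - 1) = 0 := by
          apply hadamardWalk_vanish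
          have : ((0:ℕ) - (b : ℤ) - 1) = -(b + 1 : ℤ) := by push_cast; ring
          rw [this, abs_neg, abs_of_nonneg (by positivity)]
          omega
        rw [hz]
        have hb1 : 1 ≤ b := by omega
        rw [Rval_zero_left b hb1]
        simp
      | succ a' =>
        have harg : ((a' + 1 : ℕ) : ℤ) - (b : ℤ) - 1 = (a' : ℤ) - (b : ℤ) := by push_cast; ring
        rw [harg, ih a' b (by omega)]
        rw [Rval_rec, hpow]
        push_cast
        field_simp
    rw [hfst, hsnd]

/-! ### Norm computation -/

lemma norm_int_div_sqrt_sq (m : ℤ) (t : ℕ) :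
    ‖(m : ℂ) / (Real.sqrt 2 : ℂ) ^ t‖ ^ 2 = (m : ℝ) ^ 2 / 2 ^ t := by
  rw [norm_div, norm_pow, Complex.norm_intCast, Complex.norm_real, Real.norm_eq_abs,
    abs_of_nonneg (Real.sqrt_nonneg 2), div_pow, sq_abs, ← pow_mul, mul_comm t 2, pow_mul,
    Real.sq_sqrt (by norm_num : (0:ℝ) ≤ 2)]

lemma sq_neg_one_pow_mul (m : ℕ) (x : ℤ) : ((-1) ^ m * x) ^ 2 = x ^ 2 := by
  rcases Nat.even_or_odd m with h | h
  · rw [h.neg_one_pow]; ring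
  · rw [h.neg_one_pow]; ring

theorem hadamardWalk_reflection_relations
    (t : ℕ) (ht : 1 ≤ t) (n : ℤ) (hn0 : 0 ≤ n) (hnt : n ≤ (t : ℤ))
    (hpar : (2 : ℤ) ∣ ((t : ℤ) - n)) :
    pL (-n) t = pL (n - 2) t ∧
    pR (-n) t = (((t : ℝ) - (n : ℝ)) / ((t : ℝ) + (n : ℝ))) ^ 2 * pR n t := by
  obtain ⟨B, hB⟩ := hpar
  have hB0 : 0 ≤ B := by omega
  obtain ⟨b, rfl⟩ : ∃ b : ℕ, B = (b : ℤ) := ⟨B.toNat, (Int.toNat_of_nonneg hB0).symm⟩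
  obtain ⟨a, ha⟩ : ∃ a : ℕ, t = a + b := ⟨t - b, by omega⟩
  have ha1 : 1 ≤ a := by omega
  obtain ⟨a', rfl⟩ : ∃ a', a = a' + 1 := ⟨a - 1, by omega⟩
  have e1 := hadamardWalk_closed t b (a' + 1) (by omega)
  rw [show ((b : ℤ) - ((a' + 1 : ℕ) : ℤ)) = -n by push_cast; omega] at e1
  have e2 := hadamardWalk_closed t a' (b + 1) (by omega)
  rw [show ((a' : ℤ) - ((b + 1 : ℕ) : ℤ)) = n - 2 by push_cast; omega] at e2
  have e3 := hadamardWalk_closed t (a' + 1) b (by omega)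
  rw [show (((a' + 1 : ℕ) : ℤ) - (b : ℤ)) = n by push_cast; omega] at e3
  constructor
  · rw [pL, pL, e1, e2]
    simp only
    rw [norm_int_div_sqrt_sq, norm_int_div_sqrt_sq]
    have hz : (Lval b (a' + 1)) ^ 2 = (Lval a' (b + 1)) ^ 2 := by
      show ((-1 : ℤ) ^ a' * Sval b a') ^ 2 = ((-1 : ℤ) ^ b * Sval a' b) ^ 2
      rw [sq_neg_one_pow_mul, sq_neg_one_pow_mul, Sval_comm]
    have hzr : ((Lval b (a' + 1) : ℝ)) ^ 2 = ((Lval a' (b + 1) : ℝ)) ^ 2 := by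
      exact_mod_cast congrArg (fun z : ℤ => (z : ℝ)) (congrArg (fun z => z) hz)
    rw [hzr]
  · rw [pR, pR, e1, e3]
    simp only
    rw [norm_int_div_sqrt_sq, norm_int_div_sqrt_sq]
    have hz1 : (Rval b (a' + 1)) ^ 2 = (Tval b a') ^ 2 := sq_neg_one_pow_mul a' _
    have hz1r : ((Rval b (a' + 1) : ℝ)) ^ 2 = ((Tval b a' : ℝ)) ^ 2 := by exact_mod_cast hz1
    rw [hz1r]
    cases b with
    | zero =>
      have hn_eq : (t : ℤ) = n := by omega
      have hc0 : ((t : ℝ) - (n : ℝ)) = 0 := by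
        have : ((t : ℤ) : ℝ) = ((n : ℤ) : ℝ) := by exact_mod_cast congrArg (fun z : ℤ => (z : ℝ)) hn_eq
        push_cast at this ⊢
        linarith
      rw [Tval_zero_left, hc0]
      norm_num
    | succ c =>
      have hz2 : (Rval (a' + 1) (c + 1)) ^ 2 = (Tval (a' + 1) c) ^ 2 := sq_neg_one_pow_mul c _
      have hz2r : ((Rval (a' + 1) (c + 1) : ℝ)) ^ 2 = ((Tval (a' + 1) c : ℝ)) ^ 2 := by
        exact_mod_cast hz2
      rw [hz2r]
      have hT := Tident a' c
      have hTr : ((a' : ℝ) + 1) * (Tval (c + 1) a' : ℝ) = ((c : ℝ) + 1) * (Tval (a' + 1) c : ℝ) := by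
        exact_mod_cast hT
      have hc1 : ((t : ℝ) - (n : ℝ)) = 2 * ((c : ℝ) + 1) := by
        have h : (t : ℤ) - n = 2 * ((c : ℤ) + 1) := by omega
        have := congrArg (fun z : ℤ => (z : ℝ)) h
        push_cast at this
        linarith
      have hc2 : ((t : ℝ) + (n : ℝ)) = 2 * ((a' : ℝ) + 1) := by
        have h : (t : ℤ) + n = 2 * ((a' : ℤ) + 1) := by omega
        have := congrArg (fun z : ℤ => (z : ℝ)) h
        push_cast at this
        linarith
      rw [hc1, hc2]
      have ha0 : ((a' : ℝ) + 1) ≠ 0 := by positivity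
      have hsq : (((a' : ℝ) + 1) * (Tval (c + 1) a' : ℝ)) ^ 2
          = (((c : ℝ) + 1) * (Tval (a' + 1) c : ℝ)) ^ 2 := by rw [hTr]
      have h2t : (0 : ℝ) < 2 ^ t := by positivity
      field_simp
      nlinarith [hsq]
end

section
/- Let Γ be a finite Abelian group with N = |Γ| elements, let d ≥ 1, let s : {1,…,d} → Γ, and let C be a d×d unitary complex matrix. Let U = S·(C ⊗ I) be the coined quantum walk operator on ℂ^{ {1,…,d} × Γ }. If U has d·N pairwise distinct eigenvalues, then for every unit vector ψ₀ and every v ∈ Γ, the time-averaged node distribution converges to the uniform distribution: lim_{T→∞} (1/T)·Σ_{t=0}^{T−1} P_t(v | ψ₀) = 1/N, independently of ψ₀. -/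
open Filter Topology Finset ComplexConjugate

lemma cesaro_pow (μ : ℂ) (hμ : ‖μ‖ = 1) :
    Tendsto (fun T : ℕ => (T : ℂ)⁻¹ * ∑ t ∈ Finset.range T, μ ^ t) atTop
      (𝓝 (if μ = 1 then 1 else 0)) := by
  by_cases h : μ = 1
  · simp only [h, if_pos, one_pow, Finset.sum_const, Finset.card_range, nsmul_eq_mul, mul_one]
    have hev : ∀ᶠ T : ℕ in atTop, (T : ℂ)⁻¹ * (T : ℂ) = 1 := by
      filter_upwards [eventually_gt_atTop 0] with T hT
      have : (T : ℂ) ≠ 0 := Nat.cast_ne_zero.mpr hT.ne'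
      field_simp
    exact Tendsto.congr' (hev.mono fun T h => h.symm) tendsto_const_nhds
  · rw [if_neg h]
    have hle : ∀ T : ℕ, ‖(T : ℂ)⁻¹ * ∑ t ∈ Finset.range T, μ ^ t‖
        ≤ (T : ℝ)⁻¹ * (2 / ‖μ - 1‖) := by
      intro T
      rw [norm_mul, geom_sum_eq h]
      gcongr
      · simp
      rw [norm_div]
      gcongr
      calc ‖μ ^ T - 1‖ ≤ ‖μ ^ T‖ + ‖(1 : ℂ)‖ := norm_sub_le _ _
        _ = 2 := by rw [norm_pow, hμ, norm_one]; norm_num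
    have htend : Tendsto (fun T : ℕ => (T : ℝ)⁻¹ * (2 / ‖μ - 1‖)) atTop (𝓝 0) := by
      simpa using (tendsto_inv_atTop_nhds_zero_nat (𝕜 := ℝ)).mul_const (2 / ‖μ - 1‖)
    exact squeeze_zero_norm hle htend

theorem cayley_walk_time_averaged_uniform
    {Γ : Type*} [Fintype Γ] [AddCommGroup Γ]
    (d : ℕ) (hd : 1 ≤ d) (s : Fin d → Γ)
    (C : Matrix (Fin d) (Fin d) ℂ) (hC : C ∈ Matrix.unitaryGroup (Fin d) ℂ)
    (U : ((Fin d × Γ) → ℂ) →ₗ[ℂ] ((Fin d × Γ) → ℂ))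
    (hU : ∀ (ψ : (Fin d × Γ) → ℂ) (p : Fin d × Γ),
      U ψ p = ∑ j : Fin d, C p.1 j * ψ (j, p.2 - s p.1))
    (hdistinct : ∃ lam : Fin (d * Fintype.card Γ) → ℂ,
      Function.Injective lam ∧ ∀ i, Module.End.HasEigenvalue U (lam i))
    (ψ₀ : (Fin d × Γ) → ℂ) (hψ₀ : ∑ p : Fin d × Γ, ‖ψ₀ p‖ ^ 2 = 1) :
    ∀ v : Γ,
      Tendsto (fun T : ℕ =>
          (T : ℝ)⁻¹ * ∑ t ∈ Finset.range T, ∑ i : Fin d, ‖((U ^ t) ψ₀) (i, v)‖ ^ 2)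
        atTop (𝓝 (1 / (Fintype.card Γ : ℝ))) := by
  classical
  intro v
  set N := Fintype.card Γ with hNdef
  obtain ⟨lam, hinj, heig⟩ := hdistinct
  have hN : 0 < N := Fintype.card_pos
  have hdN : 0 < d * N := Nat.mul_pos hd hN
  have hNne : (N : ℝ) ≠ 0 := Nat.cast_ne_zero.mpr hN.ne'
  haveI : Nonempty (Fin (d * N)) := ⟨⟨0, hdN⟩⟩
  -- eigenvectors
  choose φ hφ using fun k => (heig k).exists_hasEigenvector
  have hφe : ∀ k, U (φ k) = lam k • φ k := fun k => Module.End.mem_eigenspace_iff.mp (hφ k).1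
  have hφ0 : ∀ k, φ k ≠ 0 := fun k => (hφ k).2
  have hli : LinearIndependent ℂ φ := Module.End.eigenvectors_linearIndependent' U lam hinj φ hφ
  have hcard : Fintype.card (Fin (d * N)) = Module.finrank ℂ ((Fin d × Γ) → ℂ) := by
    simp [Module.finrank_fintype_fun_eq_card, Fintype.card_prod, hNdef]
  let b : Module.Basis (Fin (d * N)) ℂ ((Fin d × Γ) → ℂ) :=
    basisOfLinearIndependentOfCardEqFinrank hli hcard
  have hb : ⇑b = φ := coe_basisOfLinearIndependentOfCardEqFinrank hli hcard
  -- basic complex facts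
  have hconjmul : ∀ z : ℂ, conj z * z = ((‖z‖ ^ 2 : ℝ) : ℂ) := by
    intro z
    rw [mul_comm, Complex.mul_conj, Complex.sq_norm]
  have hsum_normSq : ∀ x : (Fin d × Γ) → ℂ,
      (∑ p : Fin d × Γ, conj (x p) * x p) = ((∑ p : Fin d × Γ, ‖x p‖ ^ 2 : ℝ) : ℂ) := by
    intro x
    push_cast
    exact Finset.sum_congr rfl fun p _ => by rw [hconjmul]; push_cast; ring
  have hpos : ∀ x : (Fin d × Γ) → ℂ, x ≠ 0 → 0 < ∑ p : Fin d × Γ, ‖x p‖ ^ 2 := by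
    intro x hx
    obtain ⟨p, hp⟩ : ∃ p, x p ≠ 0 := by
      by_contra h; push_neg at h; exact hx (funext h)
    exact Finset.sum_pos' (fun q _ => by positivity)
      ⟨p, Finset.mem_univ p, pow_pos (norm_pos_iff.mpr hp) 2⟩
  -- unitarity of C entrywise
  have hCkey : ∀ j k : Fin d, (∑ i, conj (C i j) * C i k) = if j = k then 1 else 0 := by
    intro j k
    have h1 : star C * C = 1 := hC.1
    have h2 := Matrix.ext_iff.mpr h1 j k
    simpa [Matrix.mul_apply, Matrix.star_eq_conjTranspose, Matrix.conjTranspose_apply,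
      Matrix.one_apply] using h2
  have hinner : ∀ xv yv : Fin d → ℂ,
      (∑ i, conj (∑ j, C i j * xv j) * (∑ j, C i j * yv j)) = ∑ j, conj (xv j) * yv j := by
    intro xv yv
    have hexp : ∀ i : Fin d, conj (∑ j, C i j * xv j) * (∑ j, C i j * yv j)
        = ∑ j, ∑ k, (conj (C i j) * C i k) * (conj (xv j) * yv k) := by
      intro i
      rw [map_sum, Finset.sum_mul_sum]
      exact Finset.sum_congr rfl fun j _ => Finset.sum_congr rfl fun k _ => by
        rw [map_mul]; ring
    simp_rw [hexp]
    rw [Finset.sum_comm]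
    refine Finset.sum_congr rfl fun j _ => ?_
    rw [Finset.sum_comm]
    have hfac : ∀ k, (∑ i, (conj (C i j) * C i k) * (conj (xv j) * yv k))
        = (if j = k then 1 else 0) * (conj (xv j) * yv k) := by
      intro k; rw [← Finset.sum_mul, hCkey]
    simp_rw [hfac]
    simp
  -- U preserves the inner product
  have hip_U : ∀ x y : (Fin d × Γ) → ℂ,
      (∑ p : Fin d × Γ, conj (U x p) * U y p) = ∑ p : Fin d × Γ, conj (x p) * y p := by
    intro x y
    calc (∑ p : Fin d × Γ, conj (U x p) * U y p)
        = ∑ i : Fin d, ∑ g : Γ, conj (U x (i, g)) * U y (i, g) := Fintype.sum_prod_type _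
      _ = ∑ i : Fin d, ∑ g : Γ, conj (∑ j, C i j * x (j, g)) * (∑ j, C i j * y (j, g)) := by
          refine Finset.sum_congr rfl fun i _ => ?_
          rw [← Equiv.sum_comp (Equiv.subRight (s i))
            (fun g => conj (∑ j, C i j * x (j, g)) * (∑ j, C i j * y (j, g)))]
          refine Finset.sum_congr rfl fun g _ => ?_
          rw [hU, hU]
          rfl
      _ = ∑ g : Γ, ∑ i : Fin d, conj (∑ j, C i j * x (j, g)) * (∑ j, C i j * y (j, g)) :=
          Finset.sum_comm
      _ = ∑ g : Γ, ∑ j, conj (x (j, g)) * y (j, g) :=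
          Finset.sum_congr rfl fun g _ => hinner _ _
      _ = ∑ p : Fin d × Γ, conj (x p) * y p := by
          rw [Fintype.sum_prod_type, Finset.sum_comm]
  -- eigenvalues on the unit circle
  have hconj : ∀ k, conj (lam k) * lam k = 1 := by
    intro k
    have h1 := hip_U (φ k) (φ k)
    rw [hφe k] at h1
    simp only [Pi.smul_apply, smul_eq_mul, map_mul] at h1
    have h2 : (conj (lam k) * lam k) * (∑ p : Fin d × Γ, conj (φ k p) * φ k p)
        = ∑ p : Fin d × Γ, conj (φ k p) * φ k p := by
      rw [Finset.mul_sum, ← h1]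
      exact Finset.sum_congr rfl fun p _ => by ring
    have h3 : (∑ p : Fin d × Γ, conj (φ k p) * φ k p) ≠ 0 := by
      rw [hsum_normSq]
      exact_mod_cast (hpos _ (hφ0 k)).ne'
    exact mul_right_cancel₀ h3 (by rw [h2, one_mul])
  have hlam : ∀ k, ‖lam k‖ = 1 := by
    intro k
    have h5 : ((‖lam k‖ ^ 2 : ℝ) : ℂ) = 1 := by rw [← hconjmul]; exact hconj k
    have h6 : ‖lam k‖ ^ 2 = 1 := by exact_mod_cast h5
    calc ‖lam k‖ = Real.sqrt (‖lam k‖ ^ 2) := (Real.sqrt_sq (norm_nonneg _)).symm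
      _ = 1 := by rw [h6, Real.sqrt_one]
  have hμiff : ∀ k l, (conj (lam k) * lam l = 1) ↔ k = l := by
    intro k l
    constructor
    · intro h
      have h0 : conj (lam k) ≠ 0 := by
        intro hc
        rw [hc, zero_mul] at h
        exact one_ne_zero h.symm
      have := mul_left_cancel₀ h0 (h.trans (hconj k).symm)
      exact (hinj this).symm
    · rintro rfl; exact hconj k
  -- orthogonality
  have horth : ∀ k l, k ≠ l → (∑ p : Fin d × Γ, conj (φ k p) * φ l p) = 0 := by
    intro k l hkl
    have h1 := hip_U (φ k) (φ l)
    rw [hφe k, hφe l] at h1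
    simp only [Pi.smul_apply, smul_eq_mul, map_mul] at h1
    have h2 : (conj (lam k) * lam l) * (∑ p : Fin d × Γ, conj (φ k p) * φ l p)
        = ∑ p : Fin d × Γ, conj (φ k p) * φ l p := by
      rw [Finset.mul_sum, ← h1]
      exact Finset.sum_congr rfl fun p _ => by ring
    by_contra h0
    exact hkl ((hμiff k l).mp (mul_right_cancel₀ h0 (by rw [h2, one_mul])))
  -- each eigenspace is one-dimensional (spanned by φ k)
  have huniq : ∀ (k) (x : (Fin d × Γ) → ℂ), U x = lam k • x → ∃ cc : ℂ, x = cc • φ k := by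
    intro k x hx
    have hxe : x = ∑ l, b.repr x l • b l := (b.sum_repr x).symm
    have hUx : U x = ∑ l, (lam l * b.repr x l) • b l := by
      conv_lhs => rw [hxe]
      rw [map_sum]
      refine Finset.sum_congr rfl fun l _ => ?_
      rw [map_smul]
      have hbl : U (b l) = lam l • b l := by
        rw [show b l = φ l from congrFun hb l]; exact hφe l
      rw [hbl, smul_smul, mul_comm]
    have hsm : lam k • x = ∑ l, (lam k * b.repr x l) • b l := by
      conv_lhs => rw [hxe]
      rw [Finset.smul_sum]
      exact Finset.sum_congr rfl fun l _ => smul_smul _ _ _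
    have hcoef : ∀ l, lam l * b.repr x l = lam k * b.repr x l := by
      intro l
      have e1 : (fun l => lam l * b.repr x l) = ⇑(b.repr (U x)) := by
        rw [hUx, b.repr_sum_self]
      have e2 : (fun l => lam k * b.repr x l) = ⇑(b.repr (U x)) := by
        rw [hx, hsm, b.repr_sum_self]
      rw [congrFun e1 l, congrFun e2 l]
    have hzero : ∀ l, l ≠ k → b.repr x l = 0 := by
      intro l hl
      by_contra h0
      exact (fun h => hl (hinj h)) (mul_right_cancel₀ h0 (hcoef l))
    refine ⟨b.repr x k, ?_⟩
    conv_lhs => rw [hxe]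
    rw [Finset.sum_eq_single k (fun l _ hl => by rw [hzero l hl, zero_smul])
      (fun h => absurd (Finset.mem_univ k) h)]
    rw [show b k = φ k from congrFun hb k]
  -- translation invariance of eigenvector moduli
  have key5 : ∀ (k) (u w : Γ), (∑ i, ‖φ k (i, u)‖ ^ 2) = ∑ i, ‖φ k (i, w)‖ ^ 2 := by
    intro k u w
    set g : Γ := w - u with hg
    set x : (Fin d × Γ) → ℂ := fun p => φ k (p.1, p.2 - g) with hxdef
    have hx : U x = lam k • x := by
      funext p
      have h1 : U x p = ∑ j, C p.1 j * φ k (j, p.2 - s p.1 - g) := by rw [hU]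
      have h2 : (U (φ k)) (p.1, p.2 - g) = ∑ j, C p.1 j * φ k (j, p.2 - g - s p.1) := hU _ _
      have h3 : (U (φ k)) (p.1, p.2 - g) = lam k * φ k (p.1, p.2 - g) := by
        rw [hφe k]; rfl
      calc U x p = ∑ j, C p.1 j * φ k (j, p.2 - g - s p.1) := by
            rw [h1, show p.2 - s p.1 - g = p.2 - g - s p.1 from sub_right_comm _ _ _]
        _ = lam k * φ k (p.1, p.2 - g) := by rw [← h2, h3]
        _ = (lam k • x) p := rfl
    obtain ⟨cc, hcc⟩ := huniq k x hx
    have hnx : (∑ p : Fin d × Γ, ‖x p‖ ^ 2) = ∑ p : Fin d × Γ, ‖φ k p‖ ^ 2 := by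
      rw [Fintype.sum_prod_type, Fintype.sum_prod_type]
      exact Finset.sum_congr rfl fun i _ =>
        Equiv.sum_comp (Equiv.subRight g) (fun g' => ‖φ k (i, g')‖ ^ 2)
    have hcnorm : ‖cc‖ = 1 := by
      have h1 : (∑ p : Fin d × Γ, ‖x p‖ ^ 2) = ‖cc‖ ^ 2 * ∑ p : Fin d × Γ, ‖φ k p‖ ^ 2 := by
        rw [hcc, Finset.mul_sum]
        exact Finset.sum_congr rfl fun p _ => by
          simp [Pi.smul_apply, smul_eq_mul, norm_mul, mul_pow]
      rw [hnx] at h1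
      have h2 := hpos _ (hφ0 k)
      have h3 : (‖cc‖ ^ 2 - 1) * (∑ p : Fin d × Γ, ‖φ k p‖ ^ 2) = 0 := by
        rw [sub_mul, one_mul]; linarith
      have h4 : ‖cc‖ ^ 2 = 1 := by
        rcases mul_eq_zero.mp h3 with h | h
        · linarith
        · exact absurd h h2.ne'
      calc ‖cc‖ = Real.sqrt (‖cc‖ ^ 2) := (Real.sqrt_sq (norm_nonneg _)).symm
        _ = 1 := by rw [h4, Real.sqrt_one]
    have hval : ∀ i, φ k (i, u) = cc * φ k (i, w) := by
      intro i
      have hxw : x (i, w) = cc * φ k (i, w) := by rw [hcc]; rfl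
      calc φ k (i, u) = φ k (i, w - g) := by rw [hg, sub_sub_cancel]
        _ = x (i, w) := rfl
        _ = cc * φ k (i, w) := hxw
    refine Finset.sum_congr rfl fun i _ => ?_
    rw [hval i, norm_mul, hcnorm, one_mul]
  have key5' : ∀ (k) (u : Γ),
      (∑ i, ‖φ k (i, u)‖ ^ 2) = (∑ p : Fin d × Γ, ‖φ k p‖ ^ 2) / N := by
    intro k u
    have h1 : (∑ p : Fin d × Γ, ‖φ k p‖ ^ 2) = ∑ g : Γ, ∑ i, ‖φ k (i, g)‖ ^ 2 := by
      rw [Fintype.sum_prod_type]; exact Finset.sum_comm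
    have h2 : (∑ g : Γ, ∑ i, ‖φ k (i, g)‖ ^ 2) = (N : ℝ) * ∑ i, ‖φ k (i, u)‖ ^ 2 := by
      rw [Finset.sum_congr rfl fun g _ => key5 k g u, Finset.sum_const, Finset.card_univ,
        nsmul_eq_mul]
    rw [h1, h2, mul_div_cancel_left₀ _ hNne]
  -- decomposition of ψ₀
  set c : Fin (d * N) → ℂ := fun k => b.repr ψ₀ k with hc
  have hdecomp : ψ₀ = ∑ k, c k • φ k := by
    conv_lhs => rw [← b.sum_repr ψ₀]
    exact Finset.sum_congr rfl fun k _ => by rw [congrFun hb k]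
  have hUt : ∀ t : ℕ, (U ^ t) ψ₀ = ∑ k, (c k * lam k ^ t) • φ k := by
    intro t
    induction t with
    | zero => simpa using hdecomp
    | succ t ih =>
      rw [pow_succ', Module.End.mul_apply, ih, map_sum]
      refine Finset.sum_congr rfl fun k _ => ?_
      rw [map_smul, hφe k, smul_smul, pow_succ]
      ring_nf
  -- the main expansion
  set A : Fin (d * N) × Fin (d * N) → ℂ :=
    fun kl => ∑ i, conj (c kl.1 * φ kl.1 (i, v)) * (c kl.2 * φ kl.2 (i, v)) with hA
  set μ : Fin (d * N) × Fin (d * N) → ℂ := fun kl => conj (lam kl.1) * lam kl.2 with hμ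
  have hPt : ∀ t : ℕ, (∑ i, ‖((U ^ t) ψ₀) (i, v)‖ ^ 2)
      = (∑ kl : Fin (d * N) × Fin (d * N), μ kl ^ t * A kl).re := by
    intro t
    have hz : ∀ i : Fin d, ((U ^ t) ψ₀) (i, v) = ∑ k, (c k * lam k ^ t) * φ k (i, v) := by
      intro i
      rw [hUt t]
      simp [Finset.sum_apply, Pi.smul_apply, smul_eq_mul]
    have e1 : (∑ i, conj (((U ^ t) ψ₀) (i, v)) * ((U ^ t) ψ₀) (i, v))
        = ∑ k, ∑ l, ∑ i, (conj (lam k) * lam l) ^ t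
            * (conj (c k * φ k (i, v)) * (c l * φ l (i, v))) := by
      have e2 : (∑ i, conj (((U ^ t) ψ₀) (i, v)) * ((U ^ t) ψ₀) (i, v))
          = ∑ i, ∑ k, ∑ l, (conj (lam k) * lam l) ^ t
              * (conj (c k * φ k (i, v)) * (c l * φ l (i, v))) := by
        refine Finset.sum_congr rfl fun i _ => ?_
        rw [hz i, map_sum, Finset.sum_mul_sum]
        refine Finset.sum_congr rfl fun k _ => Finset.sum_congr rfl fun l _ => ?_
        simp only [map_mul, map_pow]
        ring
      rw [e2, Finset.sum_comm]
      exact Finset.sum_congr rfl fun k _ => Finset.sum_comm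
    calc (∑ i, ‖((U ^ t) ψ₀) (i, v)‖ ^ 2)
        = ∑ i, (conj (((U ^ t) ψ₀) (i, v)) * ((U ^ t) ψ₀) (i, v)).re := by
          refine Finset.sum_congr rfl fun i _ => ?_
          rw [hconjmul, Complex.ofReal_re]
      _ = (∑ i, conj (((U ^ t) ψ₀) (i, v)) * ((U ^ t) ψ₀) (i, v)).re :=
          (Complex.re_sum _ _).symm
      _ = (∑ kl : Fin (d * N) × Fin (d * N), μ kl ^ t * A kl).re := by
          congr 1
          rw [e1, Fintype.sum_prod_type]
          refine Finset.sum_congr rfl fun k _ => Finset.sum_congr rfl fun l _ => ?_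
          rw [hA, hμ, Finset.mul_sum]
  -- pass to complex averages
  have hre : ∀ T : ℕ, (T : ℝ)⁻¹ * ∑ t ∈ Finset.range T, ∑ i, ‖((U ^ t) ψ₀) (i, v)‖ ^ 2
      = ((T : ℂ)⁻¹ * ∑ t ∈ Finset.range T,
          ∑ kl : Fin (d * N) × Fin (d * N), μ kl ^ t * A kl).re := by
    intro T
    rw [show ((T : ℂ))⁻¹ = (((T : ℝ)⁻¹ : ℝ) : ℂ) by push_cast; ring]
    rw [Complex.re_ofReal_mul]
    congr 1
    rw [Complex.re_sum]
    exact Finset.sum_congr rfl fun t _ => hPt t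
  -- the complex limit
  have hμnorm : ∀ kl : Fin (d * N) × Fin (d * N), ‖μ kl‖ = 1 := by
    intro kl
    rw [hμ, norm_mul, RCLike.norm_conj, hlam, hlam, one_mul]
  have hlimC : Tendsto (fun T : ℕ => (T : ℂ)⁻¹ * ∑ t ∈ Finset.range T,
      ∑ kl : Fin (d * N) × Fin (d * N), μ kl ^ t * A kl) atTop
      (𝓝 (∑ kl : Fin (d * N) × Fin (d * N), A kl * (if μ kl = 1 then 1 else 0))) := by
    have hswap : ∀ T : ℕ, (T : ℂ)⁻¹ * ∑ t ∈ Finset.range T,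
        ∑ kl : Fin (d * N) × Fin (d * N), μ kl ^ t * A kl
        = ∑ kl : Fin (d * N) × Fin (d * N),
            A kl * ((T : ℂ)⁻¹ * ∑ t ∈ Finset.range T, μ kl ^ t) := by
      intro T
      rw [Finset.sum_comm, Finset.mul_sum]
      refine Finset.sum_congr rfl fun kl _ => ?_
      rw [← Finset.sum_mul]
      ring
    have h1 : Tendsto (fun T : ℕ => ∑ kl : Fin (d * N) × Fin (d * N),
        A kl * ((T : ℂ)⁻¹ * ∑ t ∈ Finset.range T, μ kl ^ t)) atTop
        (𝓝 (∑ kl : Fin (d * N) × Fin (d * N), A kl * (if μ kl = 1 then 1 else 0))) := by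
      apply tendsto_finset_sum
      intro kl _
      exact (cesaro_pow (μ kl) (hμnorm kl)).const_mul (A kl)
    exact h1.congr fun T => (hswap T).symm
  have hdiag : (∑ kl : Fin (d * N) × Fin (d * N), A kl * (if μ kl = 1 then 1 else 0))
      = ∑ k, A (k, k) := by
    rw [Fintype.sum_prod_type]
    refine Finset.sum_congr rfl fun k _ => ?_
    calc (∑ l, A (k, l) * (if μ (k, l) = 1 then 1 else 0))
        = ∑ l, (if k = l then A (k, l) else 0) := by
          refine Finset.sum_congr rfl fun l _ => ?_
          by_cases h : k = l
          · rw [if_pos h, if_pos, mul_one]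
            rw [hμ]
            exact (hμiff k l).mpr h
          · rw [if_neg h, if_neg, mul_zero]
            exact fun hh => h ((hμiff k l).mp hh)
      _ = A (k, k) := by simp
  -- value of the limit
  have hAkk : ∀ k, (A (k, k)).re
      = ‖c k‖ ^ 2 * ((∑ p : Fin d × Γ, ‖φ k p‖ ^ 2) / N) := by
    intro k
    have h1 : A (k, k) = ((∑ i, ‖c k * φ k (i, v)‖ ^ 2 : ℝ) : ℂ) := by
      rw [hA]
      push_cast
      exact Finset.sum_congr rfl fun i _ => by rw [hconjmul]; push_cast; ring
    rw [h1, Complex.ofReal_re]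
    calc (∑ i, ‖c k * φ k (i, v)‖ ^ 2)
        = ‖c k‖ ^ 2 * ∑ i, ‖φ k (i, v)‖ ^ 2 := by
          rw [Finset.mul_sum]
          exact Finset.sum_congr rfl fun i _ => by rw [norm_mul, mul_pow]
      _ = ‖c k‖ ^ 2 * ((∑ p : Fin d × Γ, ‖φ k p‖ ^ 2) / N) := by rw [key5' k v]
  have hsum1 : (∑ k, ‖c k‖ ^ 2 * (∑ p : Fin d × Γ, ‖φ k p‖ ^ 2)) = 1 := by
    have e0 : (∑ p : Fin d × Γ, conj (ψ₀ p) * ψ₀ p) = ((1 : ℝ) : ℂ) := by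
      rw [hsum_normSq, hψ₀]
    have e1 : (∑ p : Fin d × Γ, conj (ψ₀ p) * ψ₀ p)
        = ∑ k, ∑ l, (conj (c k) * c l) * ∑ p : Fin d × Γ, conj (φ k p) * φ l p := by
      have e2 : (∑ p : Fin d × Γ, conj (ψ₀ p) * ψ₀ p)
          = ∑ p : Fin d × Γ, ∑ k, ∑ l, (conj (c k) * c l) * (conj (φ k p) * φ l p) := by
        refine Finset.sum_congr rfl fun p _ => ?_
        rw [show ψ₀ p = ∑ k, c k * φ k p by
          rw [hdecomp]; simp [Finset.sum_apply, Pi.smul_apply, smul_eq_mul]]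
        rw [map_sum, Finset.sum_mul_sum]
        refine Finset.sum_congr rfl fun k _ => Finset.sum_congr rfl fun l _ => ?_
        rw [map_mul]; ring
      rw [e2, Finset.sum_comm]
      refine Finset.sum_congr rfl fun k _ => ?_
      rw [Finset.sum_comm]
      exact Finset.sum_congr rfl fun l _ => by rw [Finset.mul_sum]
    have e3 : (∑ k, ∑ l, (conj (c k) * c l) * ∑ p : Fin d × Γ, conj (φ k p) * φ l p)
        = ∑ k, ((‖c k‖ ^ 2 * (∑ p : Fin d × Γ, ‖φ k p‖ ^ 2) : ℝ) : ℂ) := by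
      refine Finset.sum_congr rfl fun k _ => ?_
      rw [Finset.sum_eq_single k
        (fun l _ hl => by rw [horth k l (fun h => hl h.symm), mul_zero])
        (fun h => absurd (Finset.mem_univ k) h)]
      rw [hconjmul, hsum_normSq]
      push_cast
      ring
    have e4 : ((∑ k, ‖c k‖ ^ 2 * (∑ p : Fin d × Γ, ‖φ k p‖ ^ 2) : ℝ) : ℂ) = ((1 : ℝ) : ℂ) :=
      calc ((∑ k, ‖c k‖ ^ 2 * (∑ p : Fin d × Γ, ‖φ k p‖ ^ 2) : ℝ) : ℂ)
          = ∑ k, ((‖c k‖ ^ 2 * (∑ p : Fin d × Γ, ‖φ k p‖ ^ 2) : ℝ) : ℂ) := by push_cast; ring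
        _ = ∑ k, ∑ l, (conj (c k) * c l) * ∑ p : Fin d × Γ, conj (φ k p) * φ l p := e3.symm
        _ = ∑ p : Fin d × Γ, conj (ψ₀ p) * ψ₀ p := e1.symm
        _ = ((1 : ℝ) : ℂ) := e0
    exact_mod_cast e4
  have hlimval : (∑ k, A (k, k)).re = 1 / (N : ℝ) := by
    rw [Complex.re_sum, Finset.sum_congr rfl fun k _ => hAkk k]
    calc (∑ k, ‖c k‖ ^ 2 * ((∑ p : Fin d × Γ, ‖φ k p‖ ^ 2) / N))
        = (∑ k, ‖c k‖ ^ 2 * (∑ p : Fin d × Γ, ‖φ k p‖ ^ 2)) / N := by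
          rw [Finset.sum_div]
          exact Finset.sum_congr rfl fun k _ => by ring
      _ = 1 / (N : ℝ) := by rw [hsum1]
  -- conclude
  rw [show (1 / (N : ℝ)) = (∑ k, A (k, k)).re from hlimval.symm, ← hdiag]
  exact ((Complex.continuous_re.tendsto _).comp hlimC).congr fun T => (hre T).symm
end
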